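/- arXiv:2404.07153 — 4 statements merged into one kernel-verified Lean document; each statement's English description precedes it below -/
import Mathlib

section
/- Let S : ℤ × ℤ → ℝ be a scene, k a crop size, m ≥ 0, Δ ≥ 0 with 2Δ ≤ m, and g : (Fin k × Fin k → ℝ) → ℝ a scoring function. Suppose p ∈ (Finset.Icc Δ (m − Δ)) ×ˢ (Finset.Icc Δ (m − Δ)) and that p is the strict maximizer of q ↦ g (cropAt S q) over the union grid U = (Finset.Icc (−Δ) (m + Δ)) ×ˢ (Finset.Icc (−Δ) (m + Δ)), i.e., g (cropAt S q) < g (cropAt S p) for every q ∈ U with q ≠ p. Then for every offset δ = (δ₁, δ₂) with −Δ ≤ δ₁, δ₂ ≤ Δ, the position p lies in the window grid (Finset.Icc δ₁ (m + δ₁)) ×ˢ (Finset.Icc δ₂ (m + δ₂)) and is the strict maximizer of q ↦ g (cropAt S q) over that window grid; consequently the crop selected by maximizing the score over the crops of the δ-translated image is cropAt S p, the same crop for all such translations. -/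
/-- The crop of size `k` of a scene `S : ℤ × ℤ → ℝ` at position `p = (i, j)`:
`(a, b) ↦ S (i + a, j + b)`. -/
def cropAt (S : ℤ × ℤ → ℝ) (k : ℕ) (p : ℤ × ℤ) : Fin k × Fin k → ℝ :=
  fun q => S (p.1 + (q.1 : ℕ), p.2 + (q.2 : ℕ))

/-- If `p` lies in the interior grid `Icc Δ (m - Δ) ×ˢ Icc Δ (m - Δ)` and is the
strict maximizer of the score over the union grid
`U = Icc (-Δ) (m + Δ) ×ˢ Icc (-Δ) (m + Δ)`, then for every offset `δ` with
`-Δ ≤ δ₁, δ₂ ≤ Δ`, `p` lies in the window grid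
`Icc δ₁ (m + δ₁) ×ˢ Icc δ₂ (m + δ₂)` and is the strict maximizer of the score
over that window grid; hence the crop selected by maximizing the score over the
crops of the `δ`-translated image is `cropAt S p`, the same for all such `δ`. -/
theorem strict_max_stable_under_translations (S : ℤ × ℤ → ℝ) (k : ℕ) (m Δ : ℤ)
    (hm : 0 ≤ m) (hΔ : 0 ≤ Δ) (h2 : 2 * Δ ≤ m)
    (g : (Fin k × Fin k → ℝ) → ℝ) (p : ℤ × ℤ)
    (hp : p ∈ (Finset.Icc Δ (m - Δ)) ×ˢ (Finset.Icc Δ (m - Δ)))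
    (hmax : ∀ q ∈ (Finset.Icc (-Δ) (m + Δ)) ×ˢ (Finset.Icc (-Δ) (m + Δ)),
      q ≠ p → g (cropAt S k q) < g (cropAt S k p)) :
    ∀ δ : ℤ × ℤ, -Δ ≤ δ.1 → δ.1 ≤ Δ → -Δ ≤ δ.2 → δ.2 ≤ Δ →
      p ∈ (Finset.Icc δ.1 (m + δ.1)) ×ˢ (Finset.Icc δ.2 (m + δ.2)) ∧
      ∀ q ∈ (Finset.Icc δ.1 (m + δ.1)) ×ˢ (Finset.Icc δ.2 (m + δ.2)),
        q ≠ p → g (cropAt S k q) < g (cropAt S k p) := by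
  intro δ h1 h2' h3 h4
  simp only [Finset.mem_product, Finset.mem_Icc] at hp ⊢
  constructor
  · omega
  · intro q hq hne
    apply hmax
    · simp only [Finset.mem_product, Finset.mem_Icc] at hq ⊢
      omega
    · exact hne
end

section
/- (Theorem 1.) Let k be a crop size, m ≥ 0 and Δ ≥ 0 integers with 2Δ ≤ m, g : (Fin k × Fin k → ℝ) → ℝ a scoring function, and U = (Finset.Icc (−Δ) (m + Δ)) ×ˢ (Finset.Icc (−Δ) (m + Δ)) the union grid of crop positions. Let ν be a probability mass function on scenes S : ℤ × ℤ → ℝ, and let A assign to each scene S in the support of ν a position A(S) ∈ U which is the strict maximizer of q ↦ g (cropAt S q) over U. Assume (the pseudo-random crop function hypothesis) that the pushforward of ν under A is the uniform PMF on U. Then the ν-probability of the adversary-success event — the set of scenes S for which there exists an offset δ = (δ₁, δ₂) with −Δ ≤ δ₁, δ₂ ≤ Δ such that A(S) is not the strict maximizer of q ↦ g (cropAt S q) over the window grid (Finset.Icc δ₁ (m + δ₁)) ×ˢ (Finset.Icc δ₂ (m + δ₂)) — is at most 1 − ((m + 1 − 2Δ) / (m + 1 + 2Δ))². -/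
/-- **Theorem 1 (RICS robustness bound).** If the crop-selection map `A`
assigns to each scene in the support of `ν` the strict maximizer of the score
over the union grid `U`, and the pushforward of `ν` under `A` is the uniform
PMF on `U` (pseudo-random crop function), then the probability that an
adversary can change the selected crop with a realistic translation of size at
most `Δ` is bounded by `1 - ((m + 1 - 2Δ) / (m + 1 + 2Δ))²`. -/
theorem rics_adversarial_robustness_bound (k : ℕ) (m Δ : ℤ)
    (hm : 0 ≤ m) (hΔ : 0 ≤ Δ) (h2 : 2 * Δ ≤ m)
    (g : (Fin k × Fin k → ℝ) → ℝ)
    (ν : PMF ((ℤ × ℤ) → ℝ)) (A : ((ℤ × ℤ) → ℝ) → ℤ × ℤ)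
    (hA : ∀ S ∈ ν.support,
      A S ∈ (Finset.Icc (-Δ) (m + Δ)) ×ˢ (Finset.Icc (-Δ) (m + Δ)) ∧
      ∀ q ∈ (Finset.Icc (-Δ) (m + Δ)) ×ˢ (Finset.Icc (-Δ) (m + Δ)), q ≠ A S →
        g (cropAt S k q) < g (cropAt S k (A S)))
    (hunif : ν.map A = PMF.uniformOfFinset
      ((Finset.Icc (-Δ) (m + Δ)) ×ˢ (Finset.Icc (-Δ) (m + Δ)))
      ((Finset.nonempty_Icc.mpr (by omega)).product (Finset.nonempty_Icc.mpr (by omega)))) :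
    ν.toOuterMeasure {S : (ℤ × ℤ) → ℝ |
        ∃ δ : ℤ × ℤ, -Δ ≤ δ.1 ∧ δ.1 ≤ Δ ∧ -Δ ≤ δ.2 ∧ δ.2 ≤ Δ ∧
          ¬ (A S ∈ (Finset.Icc δ.1 (m + δ.1)) ×ˢ (Finset.Icc δ.2 (m + δ.2)) ∧
            ∀ q ∈ (Finset.Icc δ.1 (m + δ.1)) ×ˢ (Finset.Icc δ.2 (m + δ.2)), q ≠ A S →
              g (cropAt S k q) < g (cropAt S k (A S)))}
      ≤ 1 - ENNReal.ofReal
          ((((m : ℝ) + 1 - 2 * (Δ : ℝ)) / ((m : ℝ) + 1 + 2 * (Δ : ℝ))) ^ 2) := by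
  classical
  set U := (Finset.Icc (-Δ) (m + Δ)) ×ˢ (Finset.Icc (-Δ) (m + Δ)) with hUdef
  set C := (Finset.Icc Δ (m - Δ)) ×ˢ (Finset.Icc Δ (m - Δ)) with hCdef
  have hCU : C ⊆ U := by
    intro x hx
    simp only [hCdef, hUdef, Finset.mem_product, Finset.mem_Icc] at hx ⊢
    omega
  -- Key: on the support, if A S lies in the safe core C, the adversary fails.
  have key : ∀ S ∈ ν.support, S ∈ {S : (ℤ × ℤ) → ℝ |
        ∃ δ : ℤ × ℤ, -Δ ≤ δ.1 ∧ δ.1 ≤ Δ ∧ -Δ ≤ δ.2 ∧ δ.2 ≤ Δ ∧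
          ¬ (A S ∈ (Finset.Icc δ.1 (m + δ.1)) ×ˢ (Finset.Icc δ.2 (m + δ.2)) ∧
            ∀ q ∈ (Finset.Icc δ.1 (m + δ.1)) ×ˢ (Finset.Icc δ.2 (m + δ.2)), q ≠ A S →
              g (cropAt S k q) < g (cropAt S k (A S)))} → A S ∉ C := by
    intro S hS hE hAC
    obtain ⟨δ, hδ1, hδ2, hδ3, hδ4, hbad⟩ := hE
    obtain ⟨hAU, hmax⟩ := hA S hS
    apply hbad
    have hAC' := hAC
    simp only [hCdef, Finset.mem_product, Finset.mem_Icc] at hAC'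
    constructor
    · simp only [Finset.mem_product, Finset.mem_Icc]
      omega
    · intro q hq hne
      apply hmax q _ hne
      simp only [hUdef, Finset.mem_product, Finset.mem_Icc] at hq ⊢
      omega
  -- Bound the event by the preimage of `Cᶜ`.
  have step1 : ν.toOuterMeasure {S : (ℤ × ℤ) → ℝ |
        ∃ δ : ℤ × ℤ, -Δ ≤ δ.1 ∧ δ.1 ≤ Δ ∧ -Δ ≤ δ.2 ∧ δ.2 ≤ Δ ∧
          ¬ (A S ∈ (Finset.Icc δ.1 (m + δ.1)) ×ˢ (Finset.Icc δ.2 (m + δ.2)) ∧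
            ∀ q ∈ (Finset.Icc δ.1 (m + δ.1)) ×ˢ (Finset.Icc δ.2 (m + δ.2)), q ≠ A S →
              g (cropAt S k q) < g (cropAt S k (A S)))}
      ≤ ν.toOuterMeasure (A ⁻¹' (↑C : Set (ℤ × ℤ))ᶜ) := by
    rw [PMF.toOuterMeasure_apply, PMF.toOuterMeasure_apply]
    refine ENNReal.tsum_le_tsum fun S => ?_
    by_cases hS : ν S = 0
    · simp [Set.indicator, hS]
    · have hsupp : S ∈ ν.support := by rwa [PMF.mem_support_iff]
      by_cases h1 : S ∈ {S : (ℤ × ℤ) → ℝ |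
        ∃ δ : ℤ × ℤ, -Δ ≤ δ.1 ∧ δ.1 ≤ Δ ∧ -Δ ≤ δ.2 ∧ δ.2 ≤ Δ ∧
          ¬ (A S ∈ (Finset.Icc δ.1 (m + δ.1)) ×ˢ (Finset.Icc δ.2 (m + δ.2)) ∧
            ∀ q ∈ (Finset.Icc δ.1 (m + δ.1)) ×ˢ (Finset.Icc δ.2 (m + δ.2)), q ≠ A S →
              g (cropAt S k q) < g (cropAt S k (A S)))}
      · have h2' : S ∈ A ⁻¹' (↑C : Set (ℤ × ℤ))ᶜ := key S hsupp h1
        rw [Set.indicator_of_mem h1, Set.indicator_of_mem h2']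
      · rw [Set.indicator_of_notMem h1]
        exact zero_le
  refine le_trans step1 ?_
  have step2 : ν.toOuterMeasure (A ⁻¹' (↑C : Set (ℤ × ℤ))ᶜ)
      = (ν.map A).toOuterMeasure (↑C : Set (ℤ × ℤ))ᶜ :=
    (PMF.toOuterMeasure_map_apply A ν _).symm
  rw [step2, hunif, PMF.toOuterMeasure_uniformOfFinset_apply]
  rw [← hUdef]
  refine le_trans (ENNReal.div_le_div_right (Nat.cast_le.mpr (Finset.card_le_card (t := U \ C) ?_)) _) ?_
  · intro x hx
    simp only [Finset.mem_filter] at hx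
    exact Finset.mem_sdiff.mpr ⟨hx.1, by simpa using hx.2⟩
  rw [Finset.card_sdiff_of_subset hCU]
  -- cardinalities
  have hcardU : U.card = (m + 2 * Δ + 1).toNat * (m + 2 * Δ + 1).toNat := by
    simp only [hUdef, Finset.card_product, Int.card_Icc]
    congr 1 <;> congr 1 <;> omega
  have hcardC : C.card = (m - 2 * Δ + 1).toNat * (m - 2 * Δ + 1).toNat := by
    simp only [hCdef, Finset.card_product, Int.card_Icc]
    congr 1 <;> congr 1 <;> omega
  set a : ℕ := (m + 2 * Δ + 1).toNat with ha
  set b : ℕ := (m - 2 * Δ + 1).toNat with hb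
  have hba : b ≤ a := by omega
  have hapos : 0 < a := by omega
  rw [hcardU, hcardC]
  have haZ : ((a : ℕ) : ℤ) = m + 2 * Δ + 1 := by rw [ha]; omega
  have hbZ : ((b : ℕ) : ℤ) = m - 2 * Δ + 1 := by rw [hb]; omega
  have haR : (a : ℝ) = (m : ℝ) + 2 * (Δ : ℝ) + 1 := by exact_mod_cast congrArg (fun z : ℤ => (z : ℝ)) haZ
  have hbR : (b : ℝ) = (m : ℝ) - 2 * (Δ : ℝ) + 1 := by exact_mod_cast congrArg (fun z : ℤ => (z : ℝ)) hbZ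
  have haRpos : (0:ℝ) < (a : ℝ) := by exact_mod_cast hapos
  -- rewrite LHS as an ofReal
  have hLHS : ((a * a - b * b : ℕ) : ENNReal) / ((a * a : ℕ) : ENNReal)
      = ENNReal.ofReal (((a * a - b * b : ℕ) : ℝ) / ((a * a : ℕ) : ℝ)) := by
    rw [ENNReal.ofReal_div_of_pos (by positivity), ENNReal.ofReal_natCast,
      ENNReal.ofReal_natCast]
  have hRHS : (1 : ENNReal) - ENNReal.ofReal
        ((((m : ℝ) + 1 - 2 * (Δ : ℝ)) / ((m : ℝ) + 1 + 2 * (Δ : ℝ))) ^ 2)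
      = ENNReal.ofReal
        (1 - (((m : ℝ) + 1 - 2 * (Δ : ℝ)) / ((m : ℝ) + 1 + 2 * (Δ : ℝ))) ^ 2) := by
    rw [ENNReal.ofReal_sub _ (by positivity), ENNReal.ofReal_one]
  rw [hLHS, hRHS]
  apply ENNReal.ofReal_le_ofReal
  have hsub : ((a * a - b * b : ℕ) : ℝ) = (a : ℝ) * a - (b : ℝ) * b := by
    push_cast [Nat.cast_sub (Nat.mul_le_mul hba hba)]
    ring
  rw [hsub]
  have hden : ((a * a : ℕ) : ℝ) = (a : ℝ) * a := by push_cast; ring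
  rw [hden, haR, hbR]
  have hpos : (0:ℝ) < (m : ℝ) + 2 * (Δ : ℝ) + 1 := by rw [← haR]; exact haRpos
  have hpos' : (0:ℝ) < (m : ℝ) + 1 + 2 * (Δ : ℝ) := by linarith
  have hne1 : ((m:ℝ) + 2 * (Δ:ℝ) + 1) ≠ 0 := ne_of_gt hpos
  have hne2 : ((m:ℝ) + 1 + 2 * (Δ:ℝ)) ≠ 0 := ne_of_gt hpos'
  have key2 : 1 - (((m:ℝ) + 1 - 2 * (Δ:ℝ)) / ((m:ℝ) + 1 + 2 * (Δ:ℝ))) ^ 2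
      = (((m:ℝ) + 2 * (Δ:ℝ) + 1) * ((m:ℝ) + 2 * (Δ:ℝ) + 1)
          - ((m:ℝ) - 2 * (Δ:ℝ) + 1) * ((m:ℝ) - 2 * (Δ:ℝ) + 1))
        / (((m:ℝ) + 2 * (Δ:ℝ) + 1) * ((m:ℝ) + 2 * (Δ:ℝ) + 1)) := by
    field_simp
    ring
  rw [key2]
end

section
/- (Consistency lower bound, Equation 5.) Let m ≥ 0, Δ ≥ 0 be integers with Δ ≤ m, and let δ = (d₁, d₂) be an offset with |d₁| ≤ Δ and |d₂| ≤ Δ. Let U be the Finset ((Finset.Icc 0 m ∪ Finset.Icc d₁ (m + d₁)) ×ˢ (Finset.Icc 0 m ∪ Finset.Icc d₂ (m + d₂))) in ℤ × ℤ and let V be ((Finset.Icc 0 m ∩ Finset.Icc d₁ (m + d₁)) ×ˢ (Finset.Icc 0 m ∩ Finset.Icc d₂ (m + d₂))). Then for the uniform probability mass function on U, the probability of the event V is at least ((m + 1 − Δ) / (m + 1 + Δ))². -/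
lemma union_Icc_eq (m d : ℤ) (hd : |d| ≤ m) :
    Finset.Icc (0 : ℤ) m ∪ Finset.Icc d (m + d) = Finset.Icc (min 0 d) (m + max 0 d) := by
  rw [abs_le] at hd
  ext x
  simp only [Finset.mem_union, Finset.mem_Icc]
  omega

lemma inter_Icc_eq (m d : ℤ) :
    Finset.Icc (0 : ℤ) m ∩ Finset.Icc d (m + d) = Finset.Icc (max 0 d) (m + min 0 d) := by
  ext x
  simp only [Finset.mem_inter, Finset.mem_Icc]
  omega

lemma card_union_Icc (m d : ℤ) (hd : |d| ≤ m) :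
    (((Finset.Icc (0 : ℤ) m ∪ Finset.Icc d (m + d)).card : ℤ)) = m + 1 + |d| := by
  rw [union_Icc_eq m d hd, Int.card_Icc]
  have key : m + max 0 d + 1 - min 0 d = m + 1 + |d| := by
    rcases le_total 0 d with h | h
    · rw [min_eq_left h, max_eq_right h, abs_of_nonneg h]; ring
    · rw [min_eq_right h, max_eq_left h, abs_of_nonpos h]; ring
  rw [key, Int.toNat_of_nonneg (by have := abs_nonneg d; linarith)]

lemma card_inter_Icc (m d : ℤ) (hd : |d| ≤ m) :
    (((Finset.Icc (0 : ℤ) m ∩ Finset.Icc d (m + d)).card : ℤ)) = m + 1 - |d| := by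
  rw [inter_Icc_eq, Int.card_Icc]
  have key : m + min 0 d + 1 - max 0 d = m + 1 - |d| := by
    rcases le_total 0 d with h | h
    · rw [min_eq_left h, max_eq_right h, abs_of_nonneg h]; ring
    · rw [min_eq_right h, max_eq_left h, abs_of_nonpos h]; ring
  rw [key, Int.toNat_of_nonneg (by linarith)]

/-- **Consistency lower bound (Equation 5).** For an offset `δ = (d₁, d₂)` with
`|d₁|, |d₂| ≤ Δ ≤ m`, the uniform PMF on the union grid
`U = (Icc 0 m ∪ Icc d₁ (m + d₁)) ×ˢ (Icc 0 m ∪ Icc d₂ (m + d₂))` gives the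
shared grid `V = (Icc 0 m ∩ Icc d₁ (m + d₁)) ×ˢ (Icc 0 m ∩ Icc d₂ (m + d₂))`
probability at least `((m + 1 - Δ) / (m + 1 + Δ))²`. -/
theorem uniform_prob_shared_grid_ge (m Δ d₁ d₂ : ℤ)
    (hm : 0 ≤ m) (hΔ0 : 0 ≤ Δ) (hΔm : Δ ≤ m)
    (h1 : |d₁| ≤ Δ) (h2 : |d₂| ≤ Δ) :
    ENNReal.ofReal ((((m : ℝ) + 1 - (Δ : ℝ)) / ((m : ℝ) + 1 + (Δ : ℝ))) ^ 2)
      ≤ (PMF.uniformOfFinset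
          ((Finset.Icc (0 : ℤ) m ∪ Finset.Icc d₁ (m + d₁)) ×ˢ
            (Finset.Icc (0 : ℤ) m ∪ Finset.Icc d₂ (m + d₂)))
          ((Finset.Nonempty.mono Finset.subset_union_left
              (Finset.nonempty_Icc.mpr hm)).product
            (Finset.Nonempty.mono Finset.subset_union_left
              (Finset.nonempty_Icc.mpr hm)))).toOuterMeasure
        ↑((Finset.Icc (0 : ℤ) m ∩ Finset.Icc d₁ (m + d₁)) ×ˢ
          (Finset.Icc (0 : ℤ) m ∩ Finset.Icc d₂ (m + d₂))) := by
  rw [PMF.toOuterMeasure_uniformOfFinset_apply]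
  set U := (Finset.Icc (0 : ℤ) m ∪ Finset.Icc d₁ (m + d₁)) ×ˢ
      (Finset.Icc (0 : ℤ) m ∪ Finset.Icc d₂ (m + d₂)) with hU
  set V := (Finset.Icc (0 : ℤ) m ∩ Finset.Icc d₁ (m + d₁)) ×ˢ
      (Finset.Icc (0 : ℤ) m ∩ Finset.Icc d₂ (m + d₂)) with hV
  have hVU : V ⊆ U := Finset.product_subset_product
    (Finset.inter_subset_left.trans Finset.subset_union_left)
    (Finset.inter_subset_left.trans Finset.subset_union_left)
  have hfilter : U.filter (· ∈ (V : Set (ℤ × ℤ))) = V := by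
    ext x
    simp only [Finset.mem_filter, Finset.mem_coe]
    exact ⟨fun h => h.2, fun h => ⟨hVU h, h⟩⟩
  rw [Finset.filter_congr_decidable, hfilter]
  have h1' := abs_le.mp h1
  have h2' := abs_le.mp h2
  have hVcard : (V.card : ℤ) = (m + 1 - |d₁|) * (m + 1 - |d₂|) := by
    rw [hV, Finset.card_product]
    push_cast
    rw [card_inter_Icc m d₁ (le_trans h1 hΔm), card_inter_Icc m d₂ (le_trans h2 hΔm)]
  have hUcard : (U.card : ℤ) = (m + 1 + |d₁|) * (m + 1 + |d₂|) := by
    rw [hU, Finset.card_product]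
    push_cast
    rw [card_union_Icc m d₁ (le_trans h1 hΔm), card_union_Icc m d₂ (le_trans h2 hΔm)]
  have hU0 : (U.card : ℝ) > 0 := by
    have : (0:ℤ) < U.card := by
      rw [hUcard]; have := abs_nonneg d₁; have := abs_nonneg d₂
      positivity
    exact_mod_cast this
  rw [ENNReal.div_eq_inv_mul, ← ENNReal.ofReal_natCast V.card,
    ← ENNReal.ofReal_natCast U.card, ← ENNReal.ofReal_inv_of_pos hU0,
    ← ENNReal.ofReal_mul (by positivity)]
  apply ENNReal.ofReal_le_ofReal
  rw [← div_eq_inv_mul, div_pow, div_le_div_iff₀ (by positivity) hU0]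
  have hv : (V.card : ℝ) = ((m:ℝ) + 1 - |(d₁:ℝ)|) * ((m:ℝ) + 1 - |(d₂:ℝ)|) := by
    rw [← Int.cast_abs, ← Int.cast_abs]
    exact_mod_cast congrArg (Int.cast : ℤ → ℝ) hVcard
  have hu : (U.card : ℝ) = ((m:ℝ) + 1 + |(d₁:ℝ)|) * ((m:ℝ) + 1 + |(d₂:ℝ)|) := by
    rw [← Int.cast_abs, ← Int.cast_abs]
    exact_mod_cast congrArg (Int.cast : ℤ → ℝ) hUcard
  rw [hv, hu]
  have a1 : |(d₁:ℝ)| ≤ (Δ:ℝ) := by rw [← Int.cast_abs]; exact_mod_cast h1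
  have a2 : |(d₂:ℝ)| ≤ (Δ:ℝ) := by rw [← Int.cast_abs]; exact_mod_cast h2
  have b1 : (0:ℝ) ≤ |(d₁:ℝ)| := abs_nonneg _
  have b2 : (0:ℝ) ≤ |(d₂:ℝ)| := abs_nonneg _
  have hΔm' : (Δ:ℝ) ≤ (m:ℝ) := by exact_mod_cast hΔm
  have hΔ0' : (0:ℝ) ≤ (Δ:ℝ) := by exact_mod_cast hΔ0
  have hm' : (0:ℝ) ≤ (m:ℝ) := by exact_mod_cast hm
  have k1 : ((m:ℝ)+1-(Δ:ℝ))*((m:ℝ)+1+|(d₁:ℝ)|) ≤ ((m:ℝ)+1-|(d₁:ℝ)|)*((m:ℝ)+1+(Δ:ℝ)) := by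
    nlinarith
  have k2 : ((m:ℝ)+1-(Δ:ℝ))*((m:ℝ)+1+|(d₂:ℝ)|) ≤ ((m:ℝ)+1-|(d₂:ℝ)|)*((m:ℝ)+1+(Δ:ℝ)) := by
    nlinarith
  have n1 : (0:ℝ) ≤ ((m:ℝ)+1-(Δ:ℝ))*((m:ℝ)+1+|(d₂:ℝ)|) := by
    apply mul_nonneg <;> linarith
  have n2 : (0:ℝ) ≤ ((m:ℝ)+1-|(d₁:ℝ)|)*((m:ℝ)+1+(Δ:ℝ)) := by
    apply mul_nonneg <;> linarith
  nlinarith [mul_le_mul k1 k2 n1 n2]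
end

section
/- (Theorem 2.) Let N be a positive integer, k a crop size, I : ZMod N × ZMod N → ℝ an image, and g : (Fin k × Fin k → ℝ) → ℝ any (deterministic) scoring function. Suppose c₀ is a cyclic crop of I (i.e., c₀ ∈ Set.range (cyclicCrop I)) that strictly maximizes g over the set of cyclic crops of I: for every c ∈ Set.range (cyclicCrop I) with c ≠ c₀, g c < g c₀. Then for every cyclic translation offset δ ∈ ZMod N × ZMod N, c₀ is also a cyclic crop of T_δ I and strictly maximizes g over Set.range (cyclicCrop (T_δ I)). Consequently, for any classifier f : (Fin k × Fin k → ℝ) → Y, the output of the crop-selection algorithm (apply f to the unique score-maximizing cyclic crop) on T_δ I equals its output on I; no integer cyclic translation can alter the output. -/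
/-- The cyclic crop of size `k` of an image `I : ZMod N × ZMod N → ℝ` at
position `(i, j)`: `(a, b) ↦ I (i + a, j + b)`. -/
def cyclicCrop {N : ℕ} (k : ℕ) (I : ZMod N × ZMod N → ℝ) (p : ZMod N × ZMod N) :
    Fin k × Fin k → ℝ :=
  fun q => I (p.1 + ((q.1 : ℕ) : ZMod N), p.2 + ((q.2 : ℕ) : ZMod N))

/-- The cyclic translation of an image `I` by `δ`:
`T_δ I (x, y) = I (x + δ₁, y + δ₂)`. -/
def cyclicTranslate {N : ℕ} (δ : ZMod N × ZMod N) (I : ZMod N × ZMod N → ℝ) :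
    ZMod N × ZMod N → ℝ :=
  fun x => I (x.1 + δ.1, x.2 + δ.2)

/-- **Theorem 2 (100% robustness to cyclic translations).** If `c₀` is a cyclic
crop of `I` strictly maximizing the score `g` over the cyclic crops of `I`,
then for every cyclic translation offset `δ`, `c₀` is also a cyclic crop of
`T_δ I` strictly maximizing `g` over the cyclic crops of `T_δ I`; consequently,
for any classifier `f`, the output of the crop-selection algorithm (apply `f`
to the unique score-maximizing cyclic crop) on `T_δ I` equals its output on
`I`: no integer cyclic translation can alter the output. -/
theorem cyclic_rics_invariant {Y : Type*} (N : ℕ) (hN : 0 < N) (k : ℕ)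
    (I : ZMod N × ZMod N → ℝ) (g : (Fin k × Fin k → ℝ) → ℝ)
    (c₀ : Fin k × Fin k → ℝ)
    (hc₀ : c₀ ∈ Set.range (cyclicCrop k I))
    (hmax : ∀ c ∈ Set.range (cyclicCrop k I), c ≠ c₀ → g c < g c₀)
    (f : (Fin k × Fin k → ℝ) → Y) :
    ∀ δ : ZMod N × ZMod N,
      c₀ ∈ Set.range (cyclicCrop k (cyclicTranslate δ I)) ∧
      (∀ c ∈ Set.range (cyclicCrop k (cyclicTranslate δ I)), c ≠ c₀ → g c < g c₀) ∧
      (∀ c ∈ Set.range (cyclicCrop k (cyclicTranslate δ I)),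
        (∀ c' ∈ Set.range (cyclicCrop k (cyclicTranslate δ I)), c' ≠ c → g c' < g c) →
          f c = f c₀) := by
  intro δ
  have hrange : Set.range (cyclicCrop k (cyclicTranslate δ I)) =
      Set.range (cyclicCrop k I) := by
    have key : ∀ p : ZMod N × ZMod N,
        cyclicCrop k (cyclicTranslate δ I) p = cyclicCrop k I (p.1 + δ.1, p.2 + δ.2) := by
      intro p
      funext q
      simp only [cyclicCrop, cyclicTranslate]
      ring_nf
    ext c
    constructor
    · rintro ⟨p, rfl⟩
      exact ⟨(p.1 + δ.1, p.2 + δ.2), (key p).symm⟩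
    · rintro ⟨p, rfl⟩
      refine ⟨(p.1 - δ.1, p.2 - δ.2), ?_⟩
      rw [key]
      simp
  rw [hrange]
  refine ⟨hc₀, hmax, ?_⟩
  intro c hc hmaxc
  by_contra hne
  have hcc : c ≠ c₀ := fun h => hne (h ▸ rfl)
  exact absurd (hmax c hc hcc) (not_lt.mpr (le_of_lt (hmaxc c₀ hc₀ (Ne.symm hcc))))
end
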